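/- Let K be a field with more than 2 elements or let n > 1. Then no proper affine subspace of Matₙ(K) contains GLₙ(K); equivalently, the affine span of GLₙ(K) is all of Matₙ(K). -/

import Mathlib

open Matrix

section aux

variable {n : ℕ} {K : Type*} [Field K]

private lemma mem_vs {U V : Matrix (Fin n) (Fin n) K} (hU : IsUnit U) (hV : IsUnit V) :
    U - V ∈ vectorSpan K {M : Matrix (Fin n) (Fin n) K | IsUnit M} :=
  vsub_mem_vectorSpan K hU hV

private lemma offdiag_mem {i j : Fin n} (hij : i ≠ j) :
    single i j (1 : K) ∈ vectorSpan K {M : Matrix (Fin n) (Fin n) K | IsUnit M} := by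
  have hU : IsUnit (transvection i j (1 : K)) := by
    rw [Matrix.isUnit_iff_isUnit_det, det_transvection_of_ne i j hij 1]
    exact isUnit_one
  have := mem_vs (n := n) hU isUnit_one
  rwa [transvection, add_sub_cancel_left] at this

private lemma diag_mem_of_card {i : Fin n} (hK : 2 < Cardinal.mk K) :
    single i i (1 : K) ∈ vectorSpan K {M : Matrix (Fin n) (Fin n) K | IsUnit M} := by
  -- find c ≠ 0, c ≠ 1
  obtain ⟨c, hc0, hc1⟩ : ∃ c : K, c ≠ 0 ∧ c ≠ 1 := by
    classical
    by_contra hcon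
    push_neg at hcon
    have hcon' : ∀ c : K, c ≠ 0 → c = 1 := hcon
    have hinj : Function.Injective
        (fun x : K => (⟨if x = 0 then (0 : Fin 2) else 1⟩ : ULift (Fin 2))) := by
      intro a b hab
      replace hab : (if a = 0 then (0 : Fin 2) else 1) = (if b = 0 then 0 else 1) :=
        congrArg ULift.down hab
      by_cases ha : a = 0 <;> by_cases hb : b = 0
      · rw [ha, hb]
      · simp [ha, hb] at hab
      · simp [ha, hb] at hab
      · rw [hcon' a ha, hcon' b hb]
    have hle := Cardinal.mk_le_of_injective hinj
    simp only [Cardinal.mk_uLift, Cardinal.mk_fin, Nat.cast_ofNat, Cardinal.lift_ofNat] at hle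
    exact absurd (lt_of_lt_of_le hK hle) (lt_irrefl _)
  set U : Matrix (Fin n) (Fin n) K := Matrix.diagonal (fun k => if k = i then c else 1) with hUdef
  set V : Matrix (Fin n) (Fin n) K := Matrix.diagonal (fun k => if k = i then c - 1 else 1) with hVdef
  have hU : IsUnit U := by
    rw [Matrix.isUnit_iff_isUnit_det, hUdef, det_diagonal, isUnit_iff_ne_zero,
      Finset.prod_ne_zero_iff]
    intro a _
    split_ifs <;> simp [hc0]
  have hV : IsUnit V := by
    rw [Matrix.isUnit_iff_isUnit_det, hVdef, det_diagonal, isUnit_iff_ne_zero,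
      Finset.prod_ne_zero_iff]
    intro a _
    split_ifs <;> simp [sub_ne_zero.mpr hc1]
  have key : U - V = single i i (1 : K) := by
    ext a b
    simp only [hUdef, hVdef, Matrix.sub_apply, Matrix.diagonal_apply, single, of_apply]
    by_cases hab : a = b
    · subst hab
      by_cases hai : a = i
      · subst hai; simp
      · have hia : i ≠ a := fun hc => hai hc.symm
        simp [hai, hia]
    · have : ¬ (i = a ∧ i = b) := fun hc => hab (hc.1.symm.trans hc.2)
      simp [hab, this]
  exact key ▸ mem_vs hU hV

private lemma diag_mem_of_dim {i : Fin n} (hn : 1 < n) :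
    single i i (1 : K) ∈ vectorSpan K {M : Matrix (Fin n) (Fin n) K | IsUnit M} := by
  haveI : Nontrivial (Fin n) := Fin.nontrivial_iff_two_le.mpr hn
  obtain ⟨j, hj⟩ := exists_ne i
  have hij : i ≠ j := Ne.symm hj
  have hji : j ≠ i := hj
  have hU : IsUnit (transvection i j (1 : K) * transvection j i (1 : K)) := by
    rw [Matrix.isUnit_iff_isUnit_det, det_mul, det_transvection_of_ne i j hij 1,
      det_transvection_of_ne j i hji 1, one_mul]
    exact isUnit_one
  have hexp : transvection i j (1 : K) * transvection j i (1 : K) - 1 =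
      single i i (1 : K) + single i j 1 + single j i 1 := by
    simp only [transvection]
    rw [add_mul, one_mul, mul_add, mul_one, single_mul_single_same]
    ring_nf
    abel
  have hmem : transvection i j (1 : K) * transvection j i (1 : K) - 1 ∈
      vectorSpan K {M : Matrix (Fin n) (Fin n) K | IsUnit M} := mem_vs hU isUnit_one
  rw [hexp] at hmem
  have hfin := Submodule.sub_mem _ (Submodule.sub_mem _ hmem (offdiag_mem hij)) (offdiag_mem hji)
  have heq : single i i (1 : K) + single i j 1 + single j i 1 -
      single i j 1 - single j i 1 = single i i 1 := by abel
  rwa [heq] at hfin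

end aux

/-- No proper affine subspace of `Matₙ(K)` contains `GLₙ(K)` when `|K| > 2` or `n > 1`:
the affine span of the set of invertible matrices is everything. -/
theorem stmt_1 (n : ℕ) (K : Type*) [Field K]
    (h : 2 < Cardinal.mk K ∨ 1 < n) :
    affineSpan K {M : Matrix (Fin n) (Fin n) K | IsUnit M} = ⊤ := by
  have hne : ({M : Matrix (Fin n) (Fin n) K | IsUnit M}).Nonempty := ⟨1, isUnit_one⟩
  rw [AffineSubspace.affineSpan_eq_top_iff_vectorSpan_eq_top_of_nonempty K _ _ hne]
  rw [eq_top_iff]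
  intro M _
  rw [matrix_eq_sum_single M]
  refine Submodule.sum_mem _ fun i _ => Submodule.sum_mem _ fun j _ => ?_
  have : single i j (M i j) = (M i j) • single i j (1 : K) := by
    simp
  rw [this]
  refine Submodule.smul_mem _ _ ?_
  by_cases hij : i = j
  · subst hij
    rcases h with hK | hn
    · exact diag_mem_of_card hK
    · exact diag_mem_of_dim hn
  · exact offdiag_mem hij
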